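/- Let $\delta>0$ and let $K:\mathbb{R}^3\times\mathbb{R}^3\to\mathbb{C}$ satisfy $|K(x,y)|\lesssim \langle x\rangle^{-1}\langle y\rangle^{-1}\langle |x|-|y|\rangle^{-2-\delta}$. Then $T_K$ is bounded on $L^p(\mathbb{R}^3)$ for all $1\le p\le\infty$. -/

import Mathlib

open MeasureTheory Real
open scoped ENNReal NNReal

noncomputable section

abbrev E3 := EuclideanSpace ℝ (Fin 3)

/-- Japanese bracket `⟨x⟩ = (1+|x|²)^{1/2}` of a point of `ℝ³`. -/
def jb (x : E3) : ℝ := Real.sqrt (1 + ‖x‖ ^ 2)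

/-- Japanese bracket of a real number. -/
def jbR (s : ℝ) : ℝ := Real.sqrt (1 + s ^ 2)

section Aux

open Set Metric Function

lemma one_le_jbR (s : ℝ) : 1 ≤ jbR s := by
  have h := Real.sq_sqrt (show (0:ℝ) ≤ 1 + s ^ 2 by positivity)
  have h2 := Real.sqrt_nonneg (1 + s ^ 2)
  rw [jbR]; nlinarith [sq_nonneg s]

lemma jbR_pos (s : ℝ) : 0 < jbR s := lt_of_lt_of_le one_pos (one_le_jbR s)

lemma jb_eq (x : E3) : jb x = jbR ‖x‖ := rfl

lemma jbR_sub_comm (a b : ℝ) : jbR (a - b) = jbR (b - a) := by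
  rw [jbR, jbR]; ring_nf

lemma sq_jbR (s : ℝ) : jbR s ^ 2 = 1 + s ^ 2 := Real.sq_sqrt (by positivity)

/-- `⟨b⟩ ≤ √2 ⟨a⟩ ⟨a-b⟩` for real `a b`. -/
lemma jbR_le (a b : ℝ) : jbR b ≤ Real.sqrt 2 * jbR a * jbR (a - b) := by
  have h : jbR b ≤ Real.sqrt (2 * ((1 + a ^ 2) * (1 + (a - b) ^ 2))) :=
    Real.sqrt_le_sqrt (by nlinarith [sq_nonneg (a-b), sq_nonneg a, sq_nonneg (a*(a-b))])
  calc jbR b ≤ _ := h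
    _ = Real.sqrt 2 * jbR a * jbR (a - b) := by
      rw [Real.sqrt_mul (by norm_num), Real.sqrt_mul (by positivity), jbR, jbR, mul_assoc]

/-- key pointwise bound: the kernel majorant is controlled by `√2 ⟨b⟩⁻² ⟨a-b⟩^{-(1+δ)}`. -/
lemma key_pt {δ : ℝ} (hδ : 0 < δ) (a b : ℝ) :
    (jbR a)⁻¹ * (jbR b)⁻¹ * jbR (a - b) ^ (-(2 + δ)) ≤
      Real.sqrt 2 * ((1 + b ^ 2)⁻¹ * jbR (a - b) ^ (-(1 + δ))) := by
  have hb := jbR_pos b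
  have ha := jbR_pos a
  have hs := jbR_pos (a - b)
  have h1 : (jbR a)⁻¹ ≤ Real.sqrt 2 * jbR (a - b) * (jbR b)⁻¹ := by
    have h := jbR_le a b
    calc (jbR a)⁻¹ = jbR b * (jbR a)⁻¹ * (jbR b)⁻¹ := by field_simp
      _ ≤ (Real.sqrt 2 * jbR a * jbR (a - b)) * (jbR a)⁻¹ * (jbR b)⁻¹ := by gcongr
      _ = Real.sqrt 2 * jbR (a - b) * (jbR b)⁻¹ := by field_simp
  have h2 : jbR (a - b) * jbR (a - b) ^ (-(2 + δ)) = jbR (a - b) ^ (-(1 + δ)) := by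
    have : jbR (a - b) ^ (-(2 + δ)) = jbR (a - b) ^ (-(1 + δ)) * (jbR (a-b))⁻¹ := by
      rw [← Real.rpow_neg_one (jbR (a-b)), ← Real.rpow_add hs]; ring_nf
    rw [this]; field_simp
  calc (jbR a)⁻¹ * (jbR b)⁻¹ * jbR (a - b) ^ (-(2 + δ))
      ≤ (Real.sqrt 2 * jbR (a - b) * (jbR b)⁻¹) * (jbR b)⁻¹ * jbR (a - b) ^ (-(2 + δ)) := by
        gcongr
    _ = Real.sqrt 2 * ((jbR b ^ 2)⁻¹ * (jbR (a - b) * jbR (a - b) ^ (-(2 + δ)))) := by ring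
    _ = _ := by rw [h2, sq_jbR]

lemma finrank_E3 : Module.finrank ℝ E3 = 3 := by simp [finrank_euclideanSpace]

/-- Polar-coordinates formula for the Lebesgue integral of a radial function on `ℝ³`. -/
lemma lintegral_fun_norm_E3 (g : ℝ → ℝ≥0∞) (hg : Measurable g) :
    ∫⁻ x : E3, g ‖x‖ = (volume : Measure E3).toSphere univ *
      ∫⁻ r in Ioi (0 : ℝ), ENNReal.ofReal (r ^ 2) * g r := by
  have h3 : Module.finrank ℝ E3 = 3 := finrank_E3
  have hgm : Measurable fun p : sphere (0 : E3) 1 × Ioi (0 : ℝ) => g p.2.1 :=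
    (hg.comp measurable_subtype_coe).comp measurable_snd
  calc
    ∫⁻ x : E3, g ‖x‖ = ∫⁻ x : ({(0)}ᶜ : Set E3), g ‖x.1‖ ∂((volume : Measure E3).comap (↑)) := by
      rw [lintegral_subtype_comap (measurableSet_singleton _).compl fun x : E3 ↦ g ‖x‖,
        MeasureTheory.restrict_compl_singleton]
    _ = ∫⁻ p : sphere (0 : E3) 1 × Ioi (0 : ℝ), g p.2.1
        ∂(volume : Measure E3).toSphere.prod (.volumeIoiPow (Module.finrank ℝ E3 - 1)) := by
      rw [← (Measure.measurePreserving_homeomorphUnitSphereProd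
        (volume : Measure E3)).lintegral_comp hgm]
      simp only [homeomorphUnitSphereProd_apply_snd_coe]
    _ = (volume : Measure E3).toSphere univ * ∫⁻ r : Ioi (0:ℝ), g r
        ∂(Measure.volumeIoiPow (Module.finrank ℝ E3 - 1)) := by
      rw [lintegral_prod _ hgm.aemeasurable]
      simp [lintegral_const, mul_comm]
    _ = _ := by
      rw [h3]
      show _ * ∫⁻ r : Ioi (0:ℝ), g r ∂(Measure.volumeIoiPow 2) = _
      congr 1
      rw [Measure.volumeIoiPow,
        lintegral_withDensity_eq_lintegral_mul _
          (f := fun r : Ioi (0:ℝ) => ENNReal.ofReal (r.1 ^ 2)) (by fun_prop)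
          (g := fun r : Ioi (0:ℝ) => g r.1) (hg.comp measurable_subtype_coe)]
      rw [← lintegral_subtype_comap measurableSet_Ioi (fun r : ℝ => ENNReal.ofReal (r ^ 2) * g r)]
      rfl

lemma continuous_jbR : Continuous jbR := by
  unfold jbR; fun_prop

lemma continuous_jbR_rpow (c : ℝ) (t : ℝ) :
    Continuous fun r : ℝ => jbR (t - r) ^ c := by
  apply Continuous.rpow_const (continuous_jbR.comp (by fun_prop))
  exact fun r => Or.inl (jbR_pos _).ne'

/-- The one-dimensional integral `∫ ⟨s⟩^{-(1+δ)} ds` is finite. -/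
lemma I_lt_top {δ : ℝ} (hδ : 0 < δ) :
    (∫⁻ s : ℝ, ENNReal.ofReal (jbR s ^ (-(1 + δ)))) < ⊤ := by
  have hint : Integrable (fun s : ℝ => (1 + ‖s‖) ^ (-(1 + δ))) :=
    integrable_one_add_norm (by simp; linarith)
  have hpt : ∀ s : ℝ, ENNReal.ofReal (jbR s ^ (-(1 + δ))) ≤
      ENNReal.ofReal (Real.sqrt 2 ^ (1 + δ)) * ENNReal.ofReal ((1 + ‖s‖) ^ (-(1 + δ))) := by
    intro s
    rw [← ENNReal.ofReal_mul (by positivity)]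
    apply ENNReal.ofReal_le_ofReal
    have h1 : 1 + ‖s‖ ≤ Real.sqrt 2 * jbR s := by
      have h : (1 + ‖s‖) ^ 2 ≤ (Real.sqrt 2 * jbR s) ^ 2 := by
        rw [mul_pow, Real.sq_sqrt (by norm_num), sq_jbR]
        have : ‖s‖ ^ 2 = s ^ 2 := by rw [Real.norm_eq_abs, sq_abs]
        nlinarith [norm_nonneg s, sq_nonneg (1 - ‖s‖), jbR_pos s]
      have h' := Real.sqrt_le_sqrt h
      rwa [Real.sqrt_sq (by positivity),
        Real.sqrt_sq (mul_nonneg (Real.sqrt_nonneg 2) (jbR_pos s).le)] at h'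
    calc jbR s ^ (-(1 + δ)) ≤ ((1 + ‖s‖) / Real.sqrt 2) ^ (-(1 + δ)) := by
          apply Real.rpow_le_rpow_of_nonpos (by positivity) _ (by linarith)
          rw [div_le_iff₀ (by positivity)]
          linarith [h1]
      _ = Real.sqrt 2 ^ (1 + δ) * (1 + ‖s‖) ^ (-(1 + δ)) := by
          rw [Real.div_rpow (by positivity) (Real.sqrt_nonneg 2),
            Real.rpow_neg (by positivity), Real.rpow_neg (Real.sqrt_nonneg 2)]
          field_simp
  calc (∫⁻ s : ℝ, ENNReal.ofReal (jbR s ^ (-(1 + δ))))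
      ≤ ∫⁻ s : ℝ, ENNReal.ofReal (Real.sqrt 2 ^ (1 + δ)) *
          ENNReal.ofReal ((1 + ‖s‖) ^ (-(1 + δ))) := lintegral_mono hpt
    _ = ENNReal.ofReal (Real.sqrt 2 ^ (1 + δ)) *
        ∫⁻ s : ℝ, ENNReal.ofReal ((1 + ‖s‖) ^ (-(1 + δ))) :=
          lintegral_const_mul' _ _ ENNReal.ofReal_ne_top
    _ < ⊤ := by
        apply ENNReal.mul_lt_top ENNReal.ofReal_lt_top
        exact lt_of_le_of_lt (lintegral_mono fun s => Real.ofReal_le_enorm _) hint.2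

/-- Uniform (in `t`) bound for the integral of the radial majorant over `ℝ³`. -/
lemma radial_bound {δ : ℝ} (hδ : 0 < δ) (t : ℝ) :
    ∫⁻ y : E3, ENNReal.ofReal ((1 + ‖y‖ ^ 2)⁻¹ * jbR (t - ‖y‖) ^ (-(1 + δ))) ≤
      (volume : Measure E3).toSphere univ *
        ∫⁻ s : ℝ, ENNReal.ofReal (jbR s ^ (-(1 + δ))) := by
  set g : ℝ → ℝ≥0∞ := fun r => ENNReal.ofReal ((1 + r ^ 2)⁻¹ * jbR (t - r) ^ (-(1 + δ))) with hg_def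
  have hgm : Measurable g := by
    apply ENNReal.measurable_ofReal.comp
    exact (Continuous.mul (((continuous_const.add (continuous_pow 2)).inv₀
      (fun r => by show (1:ℝ) + r ^ 2 ≠ 0; positivity))) (continuous_jbR_rpow _ t)).measurable
  have : ∫⁻ y : E3, ENNReal.ofReal ((1 + ‖y‖ ^ 2)⁻¹ * jbR (t - ‖y‖) ^ (-(1 + δ))) =
      ∫⁻ y : E3, g ‖y‖ := rfl
  rw [this, lintegral_fun_norm_E3 g hgm]
  refine mul_le_mul_right ?_ _
  calc ∫⁻ r in Ioi (0 : ℝ), ENNReal.ofReal (r ^ 2) * g r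
      ≤ ∫⁻ r in Ioi (0 : ℝ), ENNReal.ofReal (jbR (t - r) ^ (-(1 + δ))) := by
        refine setLIntegral_mono' measurableSet_Ioi fun r _ => ?_
        rw [hg_def, ← ENNReal.ofReal_mul (by positivity)]
        apply ENNReal.ofReal_le_ofReal
        rw [← mul_assoc]
        have h2 : r ^ 2 * (1 + r ^ 2)⁻¹ ≤ 1 := by
          rw [mul_inv_le_iff₀ (by positivity)]; nlinarith
        nlinarith [Real.rpow_nonneg (jbR_pos (t - r)).le (-(1+δ)), h2,
          Real.rpow_nonneg (jbR_pos (t - r)).le (-(1+δ))]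
    _ ≤ ∫⁻ r : ℝ, ENNReal.ofReal (jbR (t - r) ^ (-(1 + δ))) := setLIntegral_le_lintegral _ _
    _ = ∫⁻ s : ℝ, ENNReal.ofReal (jbR s ^ (-(1 + δ))) := by
        have : ∀ r : ℝ, jbR (t - r) = jbR (r + -t) := by
          intro r; rw [jbR_sub_comm]; ring_nf
        simp_rw [this]
        exact lintegral_add_right_eq_self (fun s => ENNReal.ofReal (jbR s ^ (-(1 + δ)))) (-t)

/-- Schur test: if the kernel has uniformly bounded row and column `L¹` norms,
then the associated integral operator is bounded on `L^p` with norm at most that bound. -/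
lemma schur_test (K : E3 → E3 → ℂ) (hmeas : Measurable (Function.uncurry K))
    (A : ℝ≥0∞) (hA : A ≠ ⊤)
    (h1 : ∀ x : E3, ∫⁻ y : E3, (‖K x y‖₊ : ℝ≥0∞) ≤ A)
    (h2 : ∀ y : E3, ∫⁻ x : E3, (‖K x y‖₊ : ℝ≥0∞) ≤ A)
    (p : ℝ≥0∞) (hp : 1 ≤ p) (f : E3 → ℂ) (hf : AEStronglyMeasurable f volume) :
    eLpNorm (fun x : E3 => ∫ y : E3, K x y * f y) p volume ≤ A * eLpNorm f p volume := by
  have hfm : AEMeasurable (fun y : E3 => (‖f y‖₊ : ℝ≥0∞)) volume := hf.enorm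
  have hF : ∀ x : E3, (‖∫ y : E3, K x y * f y‖₊ : ℝ≥0∞) ≤
      ∫⁻ y : E3, (‖K x y‖₊ : ℝ≥0∞) * ‖f y‖₊ := by
    intro x
    refine (enorm_integral_le_lintegral_enorm _).trans_eq ?_
    simp_rw [enorm_mul]; rfl
  by_cases hptop : p = ⊤
  · subst hptop
    rw [eLpNorm_exponent_top, eLpNorm_exponent_top]
    set M := eLpNormEssSup f volume with hM
    have hae : ∀ᵐ y : E3 ∂volume, (‖f y‖₊ : ℝ≥0∞) ≤ M := ENNReal.ae_le_essSup _
    refine essSup_le_of_ae_le _ (Filter.Eventually.of_forall fun x => ?_)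
    calc (‖∫ y : E3, K x y * f y‖₊ : ℝ≥0∞) ≤ ∫⁻ y : E3, (‖K x y‖₊ : ℝ≥0∞) * ‖f y‖₊ := hF x
      _ ≤ ∫⁻ y : E3, (‖K x y‖₊ : ℝ≥0∞) * M :=
          lintegral_mono_ae (hae.mono fun y h => mul_le_mul_right h _)
      _ = (∫⁻ y : E3, (‖K x y‖₊ : ℝ≥0∞)) * M :=
          lintegral_mul_const M hmeas.of_uncurry_left.enorm
      _ ≤ A * M := mul_le_mul_left (h1 x) M
  · have hp0 : p ≠ 0 := fun h => by simp [h] at hp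
    set r : ℝ := p.toReal with hr_def
    have hr1 : 1 ≤ r := by
      rw [hr_def, ← ENNReal.toReal_one]
      exact ENNReal.toReal_mono hptop hp
    have hr0 : 0 < r := lt_of_lt_of_le one_pos hr1
    rw [eLpNorm_eq_lintegral_rpow_enorm_toReal hp0 hptop, eLpNorm_eq_lintegral_rpow_enorm_toReal hp0 hptop]
    -- key pointwise inequality
    have key : ∀ x : E3, (∫⁻ y : E3, (‖K x y‖₊ : ℝ≥0∞) * ‖f y‖₊) ^ r ≤
        A ^ (r - 1) * ∫⁻ y : E3, (‖K x y‖₊ : ℝ≥0∞) * (‖f y‖₊ : ℝ≥0∞) ^ r := by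
      intro x
      rcases eq_or_lt_of_le hr1 with hr1' | hr1'
      · simp only [← hr1', ENNReal.rpow_one, sub_self, ENNReal.rpow_zero, one_mul]
        exact le_refl _
      · set q : ℝ := r / (r - 1) with hq_def
        have hpq : q.HolderConjugate r := (Real.HolderConjugate.conjExponent hr1').symm
        have hkm : Measurable fun y : E3 => (‖K x y‖₊ : ℝ≥0∞) :=
          hmeas.of_uncurry_left.enorm
        have hq0 : 0 < q := hpq.pos
        have hqr : 1 / q + 1 / r = 1 := by
          rw [one_div, one_div]; exact hpq.inv_add_inv_eq_one
        have step1 : (∫⁻ y : E3, (‖K x y‖₊ : ℝ≥0∞) * ‖f y‖₊) ≤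
            (∫⁻ y : E3, (‖K x y‖₊ : ℝ≥0∞)) ^ (1 / q) *
              (∫⁻ y : E3, (‖K x y‖₊ : ℝ≥0∞) * (‖f y‖₊ : ℝ≥0∞) ^ r) ^ (1 / r) := by
          have := ENNReal.lintegral_mul_le_Lp_mul_Lq volume hpq
            (f := fun y : E3 => (‖K x y‖₊ : ℝ≥0∞) ^ (1 / q))
            (g := fun y : E3 => (‖K x y‖₊ : ℝ≥0∞) ^ (1 / r) * ‖f y‖₊)
            (hkm.pow_const _).aemeasurable ((hkm.pow_const _).aemeasurable.mul hfm)
          refine le_trans (le_of_eq ?_) (this.trans (le_of_eq ?_))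
          · refine lintegral_congr fun y => ?_
            simp only [Pi.mul_apply]
            rw [← mul_assoc,
              ← ENNReal.rpow_add_of_nonneg (x := (‖K x y‖₊ : ℝ≥0∞)) (1 / q) (1 / r)
                (one_div_nonneg.mpr hq0.le) (one_div_nonneg.mpr hr0.le),
              hqr, ENNReal.rpow_one]
          · congr 1
            · congr 1
              refine lintegral_congr fun y => ?_
              rw [← ENNReal.rpow_mul, one_div_mul_cancel hq0.ne', ENNReal.rpow_one]
            · congr 1
              refine lintegral_congr fun y => ?_
              rw [ENNReal.mul_rpow_of_nonneg _ _ (by positivity), ← ENNReal.rpow_mul,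
                one_div_mul_cancel hr0.ne', ENNReal.rpow_one]
        calc (∫⁻ y : E3, (‖K x y‖₊ : ℝ≥0∞) * ‖f y‖₊) ^ r
            ≤ ((∫⁻ y : E3, (‖K x y‖₊ : ℝ≥0∞)) ^ (1 / q) *
              (∫⁻ y : E3, (‖K x y‖₊ : ℝ≥0∞) * (‖f y‖₊ : ℝ≥0∞) ^ r) ^ (1 / r)) ^ r :=
              ENNReal.rpow_le_rpow step1 hr0.le
          _ = ((∫⁻ y : E3, (‖K x y‖₊ : ℝ≥0∞)) ^ (1 / q)) ^ r *
              ((∫⁻ y : E3, (‖K x y‖₊ : ℝ≥0∞) * (‖f y‖₊ : ℝ≥0∞) ^ r) ^ (1 / r)) ^ r := by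
              rw [ENNReal.mul_rpow_of_nonneg _ _ hr0.le]
          _ = (∫⁻ y : E3, (‖K x y‖₊ : ℝ≥0∞)) ^ (r - 1) *
              (∫⁻ y : E3, (‖K x y‖₊ : ℝ≥0∞) * (‖f y‖₊ : ℝ≥0∞) ^ r) := by
              rw [← ENNReal.rpow_mul, ← ENNReal.rpow_mul, one_div_mul_cancel hr0.ne',
                ENNReal.rpow_one]
              congr 2
              rw [hq_def]
              field_simp
          _ ≤ A ^ (r - 1) * (∫⁻ y : E3, (‖K x y‖₊ : ℝ≥0∞) * (‖f y‖₊ : ℝ≥0∞) ^ r) :=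
              mul_le_mul_left (ENNReal.rpow_le_rpow (h1 x) (by linarith)) _
    -- integrate in x and swap
    have swap : ∫⁻ x : E3, ∫⁻ y : E3, (‖K x y‖₊ : ℝ≥0∞) * (‖f y‖₊ : ℝ≥0∞) ^ r =
        ∫⁻ y : E3, ∫⁻ x : E3, (‖K x y‖₊ : ℝ≥0∞) * (‖f y‖₊ : ℝ≥0∞) ^ r := by
      apply lintegral_lintegral_swap
      exact hmeas.enorm.aemeasurable.mul
        (((hfm.comp_quasiMeasurePreserving Measure.quasiMeasurePreserving_snd).pow
          aemeasurable_const))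
    have main : (∫⁻ x : E3, (‖∫ y : E3, K x y * f y‖₊ : ℝ≥0∞) ^ r) ≤
        A ^ r * ∫⁻ y : E3, (‖f y‖₊ : ℝ≥0∞) ^ r := by
      calc (∫⁻ x : E3, (‖∫ y : E3, K x y * f y‖₊ : ℝ≥0∞) ^ r)
          ≤ ∫⁻ x : E3, (∫⁻ y : E3, (‖K x y‖₊ : ℝ≥0∞) * ‖f y‖₊) ^ r :=
            lintegral_mono fun x => ENNReal.rpow_le_rpow (hF x) hr0.le
        _ ≤ ∫⁻ x : E3, A ^ (r - 1) * ∫⁻ y : E3, (‖K x y‖₊ : ℝ≥0∞) * (‖f y‖₊ : ℝ≥0∞) ^ r :=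
            lintegral_mono key
        _ = A ^ (r - 1) * ∫⁻ x : E3, ∫⁻ y : E3, (‖K x y‖₊ : ℝ≥0∞) * (‖f y‖₊ : ℝ≥0∞) ^ r :=
            lintegral_const_mul' _ _ (ENNReal.rpow_ne_top_of_nonneg (by linarith) hA)
        _ = A ^ (r - 1) * ∫⁻ y : E3, ∫⁻ x : E3, (‖K x y‖₊ : ℝ≥0∞) * (‖f y‖₊ : ℝ≥0∞) ^ r := by
            rw [swap]
        _ = A ^ (r - 1) * ∫⁻ y : E3, (∫⁻ x : E3, (‖K x y‖₊ : ℝ≥0∞)) * (‖f y‖₊ : ℝ≥0∞) ^ r := by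
            congr 1
            refine lintegral_congr fun y => ?_
            exact lintegral_mul_const _ hmeas.of_uncurry_right.enorm
        _ ≤ A ^ (r - 1) * ∫⁻ y : E3, A * (‖f y‖₊ : ℝ≥0∞) ^ r := by
            gcongr with y
            exact h2 y
        _ = A ^ (r - 1) * (A * ∫⁻ y : E3, (‖f y‖₊ : ℝ≥0∞) ^ r) := by
            rw [lintegral_const_mul' _ _ hA]
        _ = A ^ r * ∫⁻ y : E3, (‖f y‖₊ : ℝ≥0∞) ^ r := by
            rw [← mul_assoc]
            congr 1
            nth_rewrite 2 [← ENNReal.rpow_one A]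
            rw [← ENNReal.rpow_add_of_nonneg (x := A) (r - 1) 1 (by linarith) zero_le_one,
              sub_add_cancel]
    calc (∫⁻ x : E3, (‖∫ y : E3, K x y * f y‖₊ : ℝ≥0∞) ^ r) ^ (1 / r)
        ≤ (A ^ r * ∫⁻ y : E3, (‖f y‖₊ : ℝ≥0∞) ^ r) ^ (1 / r) :=
          ENNReal.rpow_le_rpow main (by positivity)
      _ = A * (∫⁻ y : E3, (‖f y‖₊ : ℝ≥0∞) ^ r) ^ (1 / r) := by
          rw [ENNReal.mul_rpow_of_nonneg _ _ (by positivity), ← ENNReal.rpow_mul,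
            mul_one_div_cancel hr0.ne', ENNReal.rpow_one]

end Aux

/-- If `|K(x,y)| ≲ ⟨x⟩⁻¹⟨y⟩⁻¹⟨|x|-|y|⟩^{-2-δ}` for some `δ > 0`, then `T_K` is bounded on
`L^p(ℝ³)` for all `1 ≤ p ≤ ∞`. -/
theorem kernel_extra_decay_Lp_bounded (δ : ℝ) (hδ : 0 < δ) (K : E3 → E3 → ℂ)
    (hmeas : Measurable (Function.uncurry K))
    (hK : ∃ C : ℝ, ∀ x y : E3, ‖K x y‖ ≤
      C * (jb x)⁻¹ * (jb y)⁻¹ * (jbR (‖x‖ - ‖y‖)) ^ (-(2 + δ))) :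
    ∀ p : ℝ≥0∞, 1 ≤ p → ∃ C : ℝ≥0, ∀ f : E3 → ℂ, MemLp f p volume →
      eLpNorm (fun x : E3 => ∫ y : E3, K x y * f y) p volume ≤ C * eLpNorm f p volume := by
  obtain ⟨C, hC⟩ := hK
  have hC0 : 0 ≤ C := by
    have h := (norm_nonneg (K 0 0)).trans (hC 0 0)
    have h0 : jb (0 : E3) = 1 := by simp [jb, jbR]
    have h1 : jbR (‖(0 : E3)‖ - ‖(0 : E3)‖) = 1 := by simp [jbR]
    rw [h0, h1] at h
    simpa using h
  -- the uniform Schur bound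
  set A : ℝ≥0∞ := ENNReal.ofReal (C * Real.sqrt 2) *
    ((volume : Measure E3).toSphere Set.univ *
      ∫⁻ s : ℝ, ENNReal.ofReal (jbR s ^ (-(1 + δ)))) with hA_def
  have hA : A ≠ ⊤ := by
    rw [hA_def]
    refine ENNReal.mul_ne_top ENNReal.ofReal_ne_top (ENNReal.mul_ne_top ?_ (I_lt_top hδ).ne)
    exact (measure_ne_top _ _)
  -- pointwise kernel bound, row version
  have hpt1 : ∀ x y : E3, (‖K x y‖₊ : ℝ≥0∞) ≤ ENNReal.ofReal (C * Real.sqrt 2) *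
      ENNReal.ofReal ((1 + ‖y‖ ^ 2)⁻¹ * jbR (‖x‖ - ‖y‖) ^ (-(1 + δ))) := by
    intro x y
    rw [← ENNReal.ofReal_coe_nnreal, coe_nnnorm, ← ENNReal.ofReal_mul (by positivity)]
    apply ENNReal.ofReal_le_ofReal
    calc ‖K x y‖ ≤ C * (jb x)⁻¹ * (jb y)⁻¹ * (jbR (‖x‖ - ‖y‖)) ^ (-(2 + δ)) := hC x y
      _ = C * ((jbR ‖x‖)⁻¹ * (jbR ‖y‖)⁻¹ * jbR (‖x‖ - ‖y‖) ^ (-(2 + δ))) := by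
          rw [jb_eq, jb_eq]; ring
      _ ≤ C * (Real.sqrt 2 * ((1 + ‖y‖ ^ 2)⁻¹ * jbR (‖x‖ - ‖y‖) ^ (-(1 + δ)))) := by
          exact mul_le_mul_of_nonneg_left (key_pt hδ ‖x‖ ‖y‖) hC0
      _ = C * Real.sqrt 2 * ((1 + ‖y‖ ^ 2)⁻¹ * jbR (‖x‖ - ‖y‖) ^ (-(1 + δ))) := by ring
  -- pointwise kernel bound, column version
  have hpt2 : ∀ x y : E3, (‖K x y‖₊ : ℝ≥0∞) ≤ ENNReal.ofReal (C * Real.sqrt 2) *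
      ENNReal.ofReal ((1 + ‖x‖ ^ 2)⁻¹ * jbR (‖y‖ - ‖x‖) ^ (-(1 + δ))) := by
    intro x y
    rw [← ENNReal.ofReal_coe_nnreal, coe_nnnorm, ← ENNReal.ofReal_mul (by positivity)]
    apply ENNReal.ofReal_le_ofReal
    calc ‖K x y‖ ≤ C * (jb x)⁻¹ * (jb y)⁻¹ * (jbR (‖x‖ - ‖y‖)) ^ (-(2 + δ)) := hC x y
      _ = C * ((jbR ‖y‖)⁻¹ * (jbR ‖x‖)⁻¹ * jbR (‖y‖ - ‖x‖) ^ (-(2 + δ))) := by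
          rw [jb_eq, jb_eq, jbR_sub_comm ‖x‖ ‖y‖]; ring
      _ ≤ C * (Real.sqrt 2 * ((1 + ‖x‖ ^ 2)⁻¹ * jbR (‖y‖ - ‖x‖) ^ (-(1 + δ)))) := by
          exact mul_le_mul_of_nonneg_left (key_pt hδ ‖y‖ ‖x‖) hC0
      _ = C * Real.sqrt 2 * ((1 + ‖x‖ ^ 2)⁻¹ * jbR (‖y‖ - ‖x‖) ^ (-(1 + δ))) := by ring
  have h1 : ∀ x : E3, ∫⁻ y : E3, (‖K x y‖₊ : ℝ≥0∞) ≤ A := by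
    intro x
    calc ∫⁻ y : E3, (‖K x y‖₊ : ℝ≥0∞)
        ≤ ∫⁻ y : E3, ENNReal.ofReal (C * Real.sqrt 2) *
            ENNReal.ofReal ((1 + ‖y‖ ^ 2)⁻¹ * jbR (‖x‖ - ‖y‖) ^ (-(1 + δ))) :=
          lintegral_mono (hpt1 x)
      _ = ENNReal.ofReal (C * Real.sqrt 2) * ∫⁻ y : E3,
            ENNReal.ofReal ((1 + ‖y‖ ^ 2)⁻¹ * jbR (‖x‖ - ‖y‖) ^ (-(1 + δ))) :=
          lintegral_const_mul' _ _ ENNReal.ofReal_ne_top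
      _ ≤ A := by
          rw [hA_def]
          exact mul_le_mul_right (radial_bound hδ ‖x‖) _
  have h2 : ∀ y : E3, ∫⁻ x : E3, (‖K x y‖₊ : ℝ≥0∞) ≤ A := by
    intro y
    calc ∫⁻ x : E3, (‖K x y‖₊ : ℝ≥0∞)
        ≤ ∫⁻ x : E3, ENNReal.ofReal (C * Real.sqrt 2) *
            ENNReal.ofReal ((1 + ‖x‖ ^ 2)⁻¹ * jbR (‖y‖ - ‖x‖) ^ (-(1 + δ))) :=
          lintegral_mono (fun x => hpt2 x y)
      _ = ENNReal.ofReal (C * Real.sqrt 2) * ∫⁻ x : E3,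
            ENNReal.ofReal ((1 + ‖x‖ ^ 2)⁻¹ * jbR (‖y‖ - ‖x‖) ^ (-(1 + δ))) :=
          lintegral_const_mul' _ _ ENNReal.ofReal_ne_top
      _ ≤ A := by
          rw [hA_def]
          exact mul_le_mul_right (radial_bound hδ ‖y‖) _
  intro p hp
  refine ⟨A.toNNReal, fun f hf => ?_⟩
  have hAeq : (A.toNNReal : ℝ≥0∞) = A := ENNReal.coe_toNNReal hA
  rw [hAeq]
  exact schur_test K hmeas A hA h1 h2 p hp f hf.1
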